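/- Let 𝔐 = {Y_i : i ∈ I} be a nonempty family of nonempty metric spaces and let X be a metric space that is a disjoint union of the Y_i, i.e. there is a partition {X_i : i ∈ I} of X into nonempty sets such that X_i with the induced metric is isometric to Y_i for every i ∈ I. Then X is a minimal 𝔐-universal metric space if and only if the following three conditions hold: (i) every Y_i is not shifted; (ii) for all distinct i, j ∈ I the spaces Y_i and Y_j are incomparable, i.e. neither embeds isometrically into the other; (iii) for every i ∈ I there is a unique subset X^i ⊆ X such that X^i with the induced metric is isometric to Y_i. -/
import Mathlib


universe u v w

open Function Set

/-- `f` is an isometric (distance-preserving) embedding of metric spaces. -/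
def IsIsomEmb {X : Type u} {Y : Type v} [MetricSpace X] [MetricSpace Y] (f : X → Y) : Prop :=
  ∀ a b : X, dist (f a) (f b) = dist a b

/-- `X` embeds isometrically into `Y`. -/
def IsomEmbeds (X : Type u) (Y : Type v) [MetricSpace X] [MetricSpace Y] : Prop :=
  ∃ f : X → Y, IsIsomEmb f

/-- `X` and `Y` are isometric: there is a surjective isometric embedding of `X` onto `Y`. -/
def IsIsometricTo (X : Type u) (Y : Type v) [MetricSpace X] [MetricSpace Y] : Prop :=
  ∃ f : X → Y, IsIsomEmb f ∧ Surjective f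

/-- `X` is not shifted: every isometric self-embedding of `X` is surjective. -/
def NotShifted (X : Type u) [MetricSpace X] : Prop :=
  ∀ f : X → X, IsIsomEmb f → Surjective f

/-- `Y` is universal for the family `M` of metric spaces. -/
def UnivFor {ι : Type w} (M : ι → Type u) [∀ i, MetricSpace (M i)]
    (Y : Type v) [MetricSpace Y] : Prop :=
  ∀ i, IsomEmbeds (M i) Y

/-- `Y` is minimal universal for the family `M` of metric spaces: `Y` is `M`-universal and
every subset of `Y` (with the induced metric) which is `M`-universal equals `Y`. -/
def MinUnivFor {ι : Type w} (M : ι → Type u) [∀ i, MetricSpace (M i)]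
    (Y : Type v) [MetricSpace Y] : Prop :=
  UnivFor M Y ∧ ∀ S : Set Y, UnivFor M ↥S → S = Set.univ

/- Auxiliary lemmas -/

lemma isomEmb_injective {X Y : Type*} [MetricSpace X] [MetricSpace Y]
    {f : X → Y} (hf : IsIsomEmb f) : Injective f := fun a b h => by
  have h2 := hf a b
  rw [h, dist_self] at h2
  exact eq_of_dist_eq_zero h2.symm

lemma isometricTo_symm {X Y : Type*} [MetricSpace X] [MetricSpace Y]
    (h : IsIsometricTo X Y) : IsIsometricTo Y X := by
  obtain ⟨f, hf, hsurj⟩ := h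
  cases isEmpty_or_nonempty X with
  | inl hX =>
    have hY : IsEmpty Y := ⟨fun y => (hsurj y).elim fun x _ => hX.elim x⟩
    exact ⟨fun y => hY.elim y, fun a => hY.elim a, fun x => hX.elim x⟩
  | inr hX =>
    refine ⟨invFun f, fun a b => ?_, invFun_surjective (isomEmb_injective hf)⟩
    conv_rhs => rw [← invFun_eq (hsurj a), ← invFun_eq (hsurj b)]
    exact (hf _ _).symm

lemma isometricTo_range {A X : Type*} [MetricSpace A] [MetricSpace X]
    {f : A → X} (hf : IsIsomEmb f) : IsIsometricTo ↥(Set.range f) A := by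
  apply isometricTo_symm
  refine ⟨fun a => ⟨f a, mem_range_self a⟩, fun a b => ?_, fun y => ?_⟩
  · rw [Subtype.dist_eq]
    exact hf a b
  · obtain ⟨a, ha⟩ := y.2
    exact ⟨a, Subtype.ext ha⟩

lemma isomEmbeds_mono {A X : Type*} [MetricSpace A] [MetricSpace X]
    {S T : Set X} (hST : S ⊆ T) (h : IsomEmbeds A ↥S) : IsomEmbeds A ↥T := by
  obtain ⟨f, hf⟩ := h
  refine ⟨fun a => ⟨(f a : X), hST (f a).2⟩, fun a b => ?_⟩
  rw [Subtype.dist_eq, ← Subtype.dist_eq (f a) (f b)]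
  exact hf a b

/-- Let `M` be a nonempty family of nonempty metric spaces and let `X` be a disjoint union
of the members of `M`, i.e. `X` admits a partition `P` into nonempty sets with `P i`
isometric to `M i` for every `i`. Then `X` is minimal `M`-universal iff: (i) every `M i`
is not shifted; (ii) distinct members of `M` are incomparable; (iii) for every `i` there
is a unique subset of `X` isometric to `M i`. -/
theorem statement13 {ι : Type w} [Nonempty ι] (M : ι → Type u) [∀ i, MetricSpace (M i)]
    [∀ i, Nonempty (M i)] {X : Type v} [MetricSpace X]
    (P : ι → Set X)
    (hne : ∀ i, (P i).Nonempty)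
    (hdisj : ∀ i j, i ≠ j → Disjoint (P i) (P j))
    (hcov : (⋃ i, P i) = Set.univ)
    (hiso : ∀ i, IsIsometricTo ↥(P i) (M i)) :
    MinUnivFor M X ↔
      ((∀ i, NotShifted (M i)) ∧
        (∀ i j, i ≠ j → ¬ IsomEmbeds (M i) (M j)) ∧
        (∀ i, ∃! S : Set X, IsIsometricTo ↥S (M i))) := by
  haveI : ∀ i, Nonempty ↥(P i) := fun i => (hne i).to_subtype
  have hPsub : ∀ i, IsomEmbeds (M i) ↥(P i) := fun i => by
    obtain ⟨g, hg, _⟩ := isometricTo_symm (hiso i)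
    exact ⟨g, hg⟩
  constructor
  · rintro ⟨huniv, hmin⟩
    -- (i) every `M i` is not shifted
    have hns : ∀ i, NotShifted (M i) := by
      intro i f hf
      by_contra hsurj
      rw [Function.Surjective] at hsurj
      push_neg at hsurj
      obtain ⟨m, hm⟩ := hsurj
      obtain ⟨g, hg, hgs⟩ := hiso i
      obtain ⟨p, hp⟩ := hgs m
      have hginv : ∀ x, g (invFun g x) = x := fun x => invFun_eq (hgs x)
      set Y : Set X := {(p : X)}ᶜ with hY
      have hYuniv : UnivFor M ↥Y := by
        intro j
        by_cases hji : j = i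
        · subst hji
          have hmem : ∀ a : M j, ((invFun g (f a) : ↥(P j)) : X) ∈ Y := by
            intro a
            simp only [hY, Set.mem_compl_iff, Set.mem_singleton_iff]
            intro hEq
            have h1 : invFun g (f a) = p := Subtype.ext hEq
            have h2 := congrArg g h1
            rw [hginv, hp] at h2
            exact hm a h2
          refine ⟨fun a => ⟨_, hmem a⟩, fun a b => ?_⟩
          calc dist (⟨_, hmem a⟩ : ↥Y) ⟨_, hmem b⟩
              = dist ((invFun g (f a) : ↥(P j)) : X) ((invFun g (f b) : ↥(P j)) : X) :=
                Subtype.dist_eq _ _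
            _ = dist (invFun g (f a)) (invFun g (f b)) := (Subtype.dist_eq _ _).symm
            _ = dist (g (invFun g (f a))) (g (invFun g (f b))) := (hg _ _).symm
            _ = dist (f a) (f b) := by rw [hginv, hginv]
            _ = dist a b := hf a b
        · refine isomEmbeds_mono ?_ (hPsub j)
          intro x hx
          simp only [hY, Set.mem_compl_iff, Set.mem_singleton_iff]
          intro hEq
          have hpx : (p : X) ∈ P i := p.2
          rw [hEq] at hx
          exact (Set.disjoint_left.mp (hdisj j i hji) hx) hpx
      have hYu := hmin Y hYuniv
      have hpY : (p : X) ∈ Y := hYu ▸ Set.mem_univ _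
      exact hpY rfl
    -- (ii) incomparability
    have hinc : ∀ i j, i ≠ j → ¬ IsomEmbeds (M i) (M j) := by
      rintro i j hij ⟨f, hf⟩
      have hYuniv : UnivFor M ↥((P i)ᶜ) := by
        intro k
        by_cases hki : k = i
        · subst hki
          obtain ⟨e, he⟩ := hPsub j
          refine isomEmbeds_mono
            (fun x hx => Set.disjoint_left.mp (hdisj j k fun h => hij h.symm) hx)
            ⟨fun a => e (f a), fun a b => (he _ _).trans (hf a b)⟩
        · exact isomEmbeds_mono
            (fun x hx => Set.disjoint_left.mp (hdisj k i hki) hx) (hPsub k)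
      have hYu := hmin _ hYuniv
      obtain ⟨x, hx⟩ := hne i
      have hxY : x ∈ (P i)ᶜ := hYu ▸ Set.mem_univ x
      exact hxY hx
    -- (iii) uniqueness
    refine ⟨hns, hinc, fun i => ?_⟩
    have hSP : ∀ S : Set X, IsIsometricTo ↥S (M i) → S = P i := by
      intro S hS
      have hPS : P i ⊆ S := by
        have hYuniv : UnivFor M ↥(S ∪ (P i)ᶜ) := by
          intro k
          by_cases hki : k = i
          · subst hki
            obtain ⟨g', hg', _⟩ := isometricTo_symm hS
            exact isomEmbeds_mono Set.subset_union_left ⟨g', hg'⟩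
          · refine isomEmbeds_mono ?_ (hPsub k)
            intro x hx
            exact Set.mem_union_right S (Set.disjoint_left.mp (hdisj k i hki) hx)
        have hYu := hmin _ hYuniv
        intro x hx
        have hxY : x ∈ S ∪ (P i)ᶜ := hYu ▸ Set.mem_univ x
        rcases hxY with h | h
        · exact h
        · exact absurd hx h
      -- now S ⊆ P i, using NotShifted
      obtain ⟨g, hg, hgs⟩ := hS
      obtain ⟨h, hh, hhs⟩ := hiso i
      have hhinv : ∀ x, h (invFun h x) = x := fun x => invFun_eq (hhs x)
      have hFemb : IsIsomEmb
          (fun m : M i => g ⟨((invFun h m : ↥(P i)) : X), hPS (invFun h m).2⟩) := by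
        intro a b
        calc dist (g ⟨((invFun h a : ↥(P i)) : X), hPS (invFun h a).2⟩)
              (g ⟨((invFun h b : ↥(P i)) : X), hPS (invFun h b).2⟩)
            = dist (⟨((invFun h a : ↥(P i)) : X), hPS (invFun h a).2⟩ : ↥S)
                ⟨((invFun h b : ↥(P i)) : X), hPS (invFun h b).2⟩ := hg _ _
          _ = dist ((invFun h a : ↥(P i)) : X) ((invFun h b : ↥(P i)) : X) :=
              Subtype.dist_eq _ _
          _ = dist (invFun h a) (invFun h b) := (Subtype.dist_eq _ _).symm
          _ = dist (h (invFun h a)) (h (invFun h b)) := (hh _ _).symm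
          _ = dist a b := by rw [hhinv, hhinv]
      have hFsurj := hns i _ hFemb
      refine Set.Subset.antisymm ?_ hPS
      intro s hs
      obtain ⟨m, hm⟩ := hFsurj (g ⟨s, hs⟩)
      have heq : (⟨((invFun h m : ↥(P i)) : X), hPS (invFun h m).2⟩ : ↥S) = ⟨s, hs⟩ :=
        isomEmb_injective hg hm
      have heq2 : ((invFun h m : ↥(P i)) : X) = s := congrArg Subtype.val heq
      rw [← heq2]
      exact (invFun h m).2
    exact ⟨P i, hiso i, hSP⟩
  · rintro ⟨_, _, huniq⟩
    constructor
    · intro i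
      obtain ⟨g', hg', _⟩ := isometricTo_symm (hiso i)
      exact ⟨fun m => (g' m : X), fun a b => (Subtype.dist_eq _ _).symm.trans (hg' a b)⟩
    · intro S hS
      apply Set.eq_univ_of_forall
      intro x
      have hxU : x ∈ ⋃ i, P i := by rw [hcov]; exact Set.mem_univ x
      obtain ⟨i, hxi⟩ := Set.mem_iUnion.mp hxU
      obtain ⟨f, hf⟩ := hS i
      have hFemb : IsIsomEmb (fun m : M i => ((f m : ↥S) : X)) := fun a b =>
        (Subtype.dist_eq _ _).symm.trans (hf a b)
      have hT : IsIsometricTo ↥(Set.range fun m : M i => ((f m : ↥S) : X)) (M i) :=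
        isometricTo_range hFemb
      obtain ⟨U, _, hUuniq⟩ := huniq i
      have h1 := hUuniq _ hT
      have h2 := hUuniq _ (hiso i)
      have hx' : x ∈ Set.range fun m : M i => ((f m : ↥S) : X) := by
        rw [h1, ← h2]; exact hxi
      obtain ⟨m, hm⟩ := hx'
      rw [← hm]
      exact (f m).2
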